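/- arXiv:0708.1695 — 10 statements merged into one kernel-verified Lean document; each statement's English description precedes it below -/
import Mathlib

section
/- Let w be a permutation of [n] and i ∈ [n-1] with w_i = k and w_{i+1} = k+1. Then δ_k ∘ w ∘ σ̂_i = δ_{k+1} ∘ w ∘ σ̂_{i+1} as functions [n-1] → [n-1]. -/
lemma aux7 {n : ℕ} (k : Fin n) (a : Fin (n + 2)) (h : a ≠ k.castSucc.succ) :
    k.castSucc.predAbove a = k.succ.predAbove a := by
  have hv : (a : ℕ) ≠ (k : ℕ) + 1 := fun hh => h (Fin.ext (by simpa using hh))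
  rcases lt_or_ge (k.castSucc.castSucc) a with h' | h'
  · have h2 : k.succ.castSucc < a := by
      rw [Fin.lt_def] at h' ⊢
      simp only [Fin.coe_castSucc, Fin.val_succ] at h' ⊢
      omega
    rw [Fin.predAbove_of_castSucc_lt _ _ h', Fin.predAbove_of_castSucc_lt _ _ h2]
  · have h2 : a ≤ k.succ.castSucc := by
      rw [Fin.le_def] at h' ⊢
      simp only [Fin.coe_castSucc, Fin.val_succ] at h' ⊢
      omega
    rw [Fin.predAbove_of_le_castSucc _ _ h', Fin.predAbove_of_le_castSucc _ _ h2]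

/-- If `w i = k` and `w (i+1) = k + 1`, then
`δ_k ∘ w ∘ σ̂_i = δ_{k+1} ∘ w ∘ σ̂_{i+1} : [n-1] → [n-1]`. -/
theorem stmt7 (n : ℕ) (w : Equiv.Perm (Fin (n + 2))) (i : Fin (n + 1)) (k : Fin n)
    (h1 : w i.castSucc = k.castSucc.castSucc) (h2 : w i.succ = k.castSucc.succ)
    (x : Fin (n + 1)) :
    k.castSucc.predAbove (w (i.castSucc.succAbove x)) =
      k.succ.predAbove (w (i.succ.succAbove x)) := by
  rcases lt_trichotomy x i with hx | hx | hx
  · have e1 : i.castSucc.succAbove x = x.castSucc := by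
      rw [Fin.succAbove_of_castSucc_lt] ; exact Fin.castSucc_lt_castSucc_iff.mpr hx
    have e2 : i.succ.succAbove x = x.castSucc := by
      rw [Fin.succAbove_of_castSucc_lt] ; exact (Fin.castSucc_lt_succ_iff).mpr hx.le
    rw [e1, e2]
    apply aux7
    rw [← h2]
    intro hc
    have hval := congrArg Fin.val (w.injective hc)
    have hxv := Fin.lt_def.mp hx
    simp only [Fin.coe_castSucc, Fin.val_succ] at hval
    omega
  · subst hx
    have e1 : x.castSucc.succAbove x = x.succ := by
      rw [Fin.succAbove_of_le_castSucc] ; exact le_refl _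
    have e2 : x.succ.succAbove x = x.castSucc := by
      rw [Fin.succAbove_of_castSucc_lt] ; exact (Fin.castSucc_lt_succ : x.castSucc < x.succ)
    rw [e1, e2, h1, h2]
    have hle : k.castSucc.castSucc ≤ k.succ.castSucc :=
      Fin.castSucc_le_castSucc_iff.mpr (Fin.castSucc_lt_succ : k.castSucc < k.succ).le
    rw [Fin.predAbove_of_castSucc_lt _ _ Fin.castSucc_lt_succ,
      Fin.predAbove_of_le_castSucc _ _ hle]
    simp
  · have e1 : i.castSucc.succAbove x = x.succ := by
      rw [Fin.succAbove_of_le_castSucc] ; exact Fin.castSucc_le_castSucc_iff.mpr hx.le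
    have e2 : i.succ.succAbove x = x.succ := by
      rw [Fin.succAbove_of_le_castSucc]
      exact Fin.succ_le_castSucc_iff.mpr hx
    rw [e1, e2]
    apply aux7
    rw [← h2]
    intro hc
    have hval := congrArg Fin.val (w.injective hc)
    have hxv := Fin.lt_def.mp hx
    simp only [Fin.val_succ] at hval
    omega
end

section
/- Let w be a permutation of [n], i ∈ [n-1] with w_i = k and w_{i+1} = k+1, and let ψ = δ_k ∘ w ∘ σ̂_i. Then for j ∈ [n-2], j is an ascent of ψ (i.e. ψ(j) < ψ(j+1)) if and only if σ̂_i(j) is an ascent of w (i.e. w(σ̂_i(j)) < w(σ̂_i(j)+1)). -/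
lemma lemA {n : ℕ} (k : Fin (n+1)) (x y : Fin (n+2))
    (h : ¬(x = k.castSucc ∧ y = k.succ)) :
    k.predAbove x < k.predAbove y ↔ x < y := by
  rw [Fin.ext_iff, Fin.ext_iff] at h
  simp only [Fin.predAbove, Fin.lt_def, Fin.coe_castSucc, Fin.val_succ] at *
  split_ifs <;> simp only [Fin.coe_pred, Fin.coe_castPred, Fin.val_succ, Fin.coe_castSucc] <;> omega

/-- With `w i = k`, `w (i+1) = k+1` and `ψ = δ_k ∘ w ∘ σ̂_i`, for `j ∈ [n-2]`:
`j` is an ascent of `ψ` iff `σ̂_i(j)` is an ascent of `w`. -/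
theorem stmt8 (n : ℕ) (w : Equiv.Perm (Fin (n + 2))) (i k : Fin (n + 1))
    (h1 : w i.castSucc = k.castSucc) (h2 : w i.succ = k.succ) (j : Fin n) :
    k.predAbove (w (i.castSucc.succAbove j.castSucc)) <
        k.predAbove (w (i.castSucc.succAbove j.succ)) ↔
      w (i.castSucc.succAbove j.castSucc) < w (i.castSucc.succAbove j.castSucc + 1) := by
  have hs : ∀ (x : Fin (n+1)), (i.castSucc.succAbove x).val
      = if x.val < i.val then x.val else x.val + 1 := by
    intro x
    simp only [Fin.succAbove, Fin.lt_def, Fin.coe_castSucc]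
    split_ifs <;> simp
  set a := i.castSucc.succAbove j.castSucc with hadef
  set b := i.castSucc.succAbove j.succ with hbdef
  have hav : a.val = if j.val < i.val then j.val else j.val + 1 := hs _
  have hbv : b.val = if j.val + 1 < i.val then j.val + 1 else j.val + 2 := by
    have := hs j.succ; simpa using this
  have ha1 : (a + 1).val = a.val + 1 := by
    apply Fin.val_add_one_of_lt
    rw [Fin.lt_def, Fin.val_last, hav]
    split_ifs <;> omega
  rcases lt_trichotomy (j.val + 1) i.val with hc | hc | hc
  · have hav' : a.val = j.val := by rw [hav]; split_ifs <;> omega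
    have hbv' : b.val = j.val + 1 := by rw [hbv]; split_ifs <;> omega
    have hba : b = a + 1 := by rw [Fin.ext_iff]; omega
    rw [hba]
    apply lemA
    rintro ⟨e1, e2⟩
    have he : a = i.castSucc := w.injective (e1.trans h1.symm)
    rw [Fin.ext_iff, Fin.coe_castSucc] at he
    omega
  · have hav' : a.val = j.val := by rw [hav]; split_ifs <;> omega
    have hA : a + 1 = i.castSucc := by rw [Fin.ext_iff, Fin.coe_castSucc]; omega
    have hB : b = i.succ := by rw [Fin.ext_iff, Fin.val_succ, hbv]; split_ifs <;> omega
    rw [hA, hB, h1, h2]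
    have hne1 : w a ≠ k.castSucc := by
      intro e; have he : a = i.castSucc := w.injective (e.trans h1.symm)
      rw [Fin.ext_iff, Fin.coe_castSucc] at he; omega
    have hne2 : w a ≠ k.succ := by
      intro e; have he : a = i.succ := w.injective (e.trans h2.symm)
      rw [Fin.ext_iff, Fin.val_succ] at he; omega
    rw [Ne, Fin.ext_iff] at hne1 hne2
    simp only [Fin.predAbove, Fin.lt_def, Fin.coe_castSucc, Fin.val_succ] at hne1 hne2 ⊢
    split_ifs <;> simp only [Fin.coe_pred, Fin.coe_castPred, Fin.val_succ, Fin.coe_castSucc] <;> omega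
  · have hav' : a.val = j.val + 1 := by rw [hav]; split_ifs <;> omega
    have hbv' : b.val = j.val + 2 := by rw [hbv]; split_ifs <;> omega
    have hba : b = a + 1 := by rw [Fin.ext_iff]; omega
    rw [hba]
    apply lemA
    rintro ⟨e1, e2⟩
    have he : a = i.castSucc := w.injective (e1.trans h1.symm)
    rw [Fin.ext_iff, Fin.coe_castSucc] at he
    omega
end

section
/- Let u be a permutation of [n-1] and k ∈ [n-1]. Then there exists a unique pair (w, i) where w is a permutation of [n], i ∈ [n-1], w_i = k, w_{i+1} = k+1, and δ_k ∘ w ∘ σ̂_i = u. Explicitly, i is the unique index with u(i) = k, and w(j) = k if j = i, w(j) = σ̂_k(u(δ_i(j))) otherwise. -/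
open Fin

private def wperm (n : ℕ) (u : Equiv.Perm (Fin (n + 1))) (k : Fin (n + 1)) :
    Equiv.Perm (Fin (n + 2)) where
  toFun j := if j = (u.symm k).castSucc then k.castSucc
    else k.castSucc.succAbove (u ((u.symm k).predAbove j))
  invFun j := if j = k.castSucc then (u.symm k).castSucc
    else (u.symm k).castSucc.succAbove (u.symm (k.predAbove j))
  left_inv j := by
    dsimp only
    by_cases h : j = (u.symm k).castSucc
    · simp [h]
    · rw [if_neg h, if_neg (Fin.succAbove_ne _ _),
        Fin.predAbove_succAbove, Equiv.symm_apply_apply, Fin.succAbove_predAbove h]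
  right_inv j := by
    dsimp only
    by_cases h : j = k.castSucc
    · simp [h]
    · rw [if_neg h, if_neg (Fin.succAbove_ne _ _),
        Fin.predAbove_succAbove, Equiv.apply_symm_apply, Fin.succAbove_predAbove h]

private lemma wperm_apply (n : ℕ) (u : Equiv.Perm (Fin (n + 1))) (k : Fin (n + 1))
    (j : Fin (n + 2)) :
    wperm n u k j = if j = (u.symm k).castSucc then k.castSucc
      else k.castSucc.succAbove (u ((u.symm k).predAbove j)) := rfl

private lemma wchar (n : ℕ) (u : Equiv.Perm (Fin (n + 1))) (k : Fin (n + 1))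
    (w : Equiv.Perm (Fin (n + 2))) (i : Fin (n + 1))
    (h1 : w i.castSucc = k.castSucc) (h2 : w i.succ = k.succ)
    (h3 : ∀ x, k.predAbove (w (i.castSucc.succAbove x)) = u x) :
    u i = k ∧ ∀ j : Fin (n + 2), j ≠ i.castSucc →
      w j = k.castSucc.succAbove (u (i.predAbove j)) := by
  constructor
  · have := h3 i
    rw [Fin.succAbove_castSucc_self, h2, Fin.predAbove_succ_self] at this
    exact this.symm
  · intro j hj
    have hwj : w j ≠ k.castSucc := by
      intro h
      exact hj (w.injective (h.trans h1.symm))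
    have := h3 (i.predAbove j)
    rw [Fin.succAbove_predAbove hj] at this
    rw [← this, Fin.succAbove_predAbove hwj]

/-- Given a permutation `u` of `[n-1]` and `k ∈ [n-1]`, there exists a unique pair
`(w, i)` with `w` a permutation of `[n]`, `i ∈ [n-1]`, `w i = k`, `w (i+1) = k+1` and
`δ_k ∘ w ∘ σ̂_i = u`.  Explicitly, `i` is the unique index with `u i = k`, and
`w j = k` for `j = i`, `w j = σ̂_k (u (δ_i j))` otherwise. -/
theorem stmt9 (n : ℕ) (u : Equiv.Perm (Fin (n + 1))) (k : Fin (n + 1)) :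
    (∃! p : Equiv.Perm (Fin (n + 2)) × Fin (n + 1),
      p.1 p.2.castSucc = k.castSucc ∧ p.1 p.2.succ = k.succ ∧
        ∀ x, k.predAbove (p.1 (p.2.castSucc.succAbove x)) = u x) ∧
    ∀ (w : Equiv.Perm (Fin (n + 2))) (i : Fin (n + 1)),
      (w i.castSucc = k.castSucc ∧ w i.succ = k.succ ∧
          ∀ x, k.predAbove (w (i.castSucc.succAbove x)) = u x) →
        (u i = k ∧ ∀ j : Fin (n + 2), j ≠ i.castSucc →
          w j = k.castSucc.succAbove (u (i.predAbove j))) := by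
  constructor
  · refine ⟨(wperm n u k, u.symm k), ⟨?_, ?_, ?_⟩, ?_⟩
    · rw [wperm_apply, if_pos rfl]
    · rw [wperm_apply, if_neg (Fin.castSucc_lt_succ).ne', Fin.predAbove_succ_self,
        Equiv.apply_symm_apply, Fin.succAbove_castSucc_self]
    · intro x
      rw [wperm_apply, if_neg (Fin.succAbove_ne _ _), Fin.predAbove_succAbove,
        Fin.predAbove_succAbove]
    · rintro ⟨w, i⟩ ⟨h1, h2, h3⟩
      obtain ⟨hu, hw⟩ := wchar n u k w i h1 h2 h3
      have hi : i = u.symm k := by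
        rw [← hu, Equiv.symm_apply_apply]
      subst hi
      refine Prod.ext ?_ rfl
      apply Equiv.ext
      intro j
      show w j = wperm n u k j
      by_cases h : j = (u.symm k).castSucc
      · subst h
        rw [h1, wperm_apply, if_pos rfl]
      · rw [hw j h, wperm_apply, if_neg h]
  · rintro w i ⟨h1, h2, h3⟩
    exact wchar n u k w i h1 h2 h3
end

section
/- The map sending a pair (w,i) — with w a permutation of [n], i ∈ [n-1], w_i = k, w_{i+1} = k+1 — to the permutation δ_k ∘ w ∘ σ̂_i of [n-1] is an isomorphism of partial orders, where pairs are ordered by: (w,i) ≤ (w',i) iff w ≤ w' in the weak Bruhat (left inversion) order and both satisfy the constraint; equivalently, the derived lattice Cov(S_n, (⊥, σ_k)) of the permutohedron S_n at the atomic cover given by σ_k is isomorphic to the permutohedron S_{n-1}. -/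
/-- The inversion set of a permutation `w`: pairs `(a,b)` with `a < b` and
`w⁻¹ a > w⁻¹ b`. -/
def inversions {m : ℕ} (w : Equiv.Perm (Fin m)) : Set (Fin m × Fin m) :=
  {p | p.1 < p.2 ∧ w⁻¹ p.2 < w⁻¹ p.1}

theorem perm_apply_inv_self {α : Type*} (f : Equiv.Perm α) (x : α) : f (f⁻¹ x) = x :=
  f.apply_symm_apply x

section aux

open Fin

variable {n : ℕ}

/-- Characterization of inversions of `w` in terms of inversions of the reduced
permutation `u`, given the compatibility `w ∘ succAbove i.castSucc = succAbove k.castSucc ∘ u`. -/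
lemma inv_char (k : Fin (n+1)) (w : Equiv.Perm (Fin (n+2))) (i : Fin (n+1))
    (u : Equiv.Perm (Fin (n+1)))
    (hw0 : w i.castSucc = k.castSucc)
    (hw1 : w i.succ = k.succ)
    (hu : ∀ x, w (i.castSucc.succAbove x) = k.castSucc.succAbove (u x)) :
    (∀ a b, ((k.castSucc.succAbove a, k.castSucc.succAbove b) ∈ inversions w ↔
        (a, b) ∈ inversions u)) ∧
    (∀ b, ((k.castSucc, k.castSucc.succAbove b) ∈ inversions w ↔ (k, b) ∈ inversions u)) ∧
    (∀ a, ((k.castSucc.succAbove a, k.castSucc) ∈ inversions w ↔ (a, k) ∈ inversions u)) := by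
  have hui : u i = k := by
    have h := hu i
    rw [succAbove_castSucc_self, hw1, ← succAbove_castSucc_self] at h
    exact (succAbove_right_injective (p := k.castSucc) h.symm)
  have hsym0 : w⁻¹ k.castSucc = i.castSucc := by
    rw [← hw0]; exact w.symm_apply_apply _
  have hsym : ∀ y, w⁻¹ (k.castSucc.succAbove y) = i.castSucc.succAbove (u⁻¹ y) := by
    intro y
    have h := hu (u⁻¹ y)
    rw [perm_apply_inv_self] at h
    rw [← h]
    exact w.symm_apply_apply _
  have huik : u⁻¹ k = i := by rw [← hui]; exact u.symm_apply_apply _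
  refine ⟨?_, ?_, ?_⟩
  · intro a b
    simp only [inversions, Set.mem_setOf_eq, hsym]
    rw [succAbove_lt_succAbove_iff, succAbove_lt_succAbove_iff]
  · intro b
    simp only [inversions, Set.mem_setOf_eq, hsym, hsym0, huik]
    constructor
    · rintro ⟨h1, h2⟩
      rw [succAbove_lt_iff_castSucc_lt, castSucc_lt_castSucc_iff] at h2
      refine ⟨?_, h2⟩
      rcases lt_trichotomy k b with h | h | h
      · exact h
      · subst h; rw [huik] at h2; exact absurd h2 (lt_irrefl _)
      · exact absurd (lt_succAbove_iff_le_castSucc k.castSucc b |>.1 h1)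
          (by simpa [castSucc_le_castSucc_iff, not_le] using h)
    · rintro ⟨h1, h2⟩
      refine ⟨?_, ?_⟩
      · rw [lt_succAbove_iff_le_castSucc, castSucc_le_castSucc_iff]; exact le_of_lt h1
      · rw [succAbove_lt_iff_castSucc_lt, castSucc_lt_castSucc_iff]; exact h2
  · intro a
    simp only [inversions, Set.mem_setOf_eq, hsym, hsym0, huik]
    constructor
    · rintro ⟨h1, h2⟩
      rw [succAbove_lt_iff_castSucc_lt, castSucc_lt_castSucc_iff] at h1
      rw [lt_succAbove_iff_le_castSucc, castSucc_le_castSucc_iff] at h2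
      refine ⟨h1, lt_of_le_of_ne h2 ?_⟩
      intro h
      have h3 := congrArg u h
      rw [perm_apply_inv_self, hui] at h3
      rw [← h3] at h1; exact absurd h1 (lt_irrefl _)
    · rintro ⟨h1, h2⟩
      refine ⟨?_, ?_⟩
      · rw [succAbove_lt_iff_castSucc_lt, castSucc_lt_castSucc_iff]; exact h1
      · rw [lt_succAbove_iff_le_castSucc, castSucc_le_castSucc_iff]; exact le_of_lt h2

end aux

/-- The map `(w, i) ↦ δ_k ∘ w ∘ σ̂_i`, defined on the covers of the permutohedron `S_n`
perspective to the atomic cover `(⊥, σ_k)` (i.e. pairs with `w i = k`, `w (i+1) = k+1`),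
is a bijection onto `S_{n-1}` which preserves and reflects the weak Bruhat order
(inclusion of inversion sets): the derived lattice `Cov(S_n, (⊥, σ_k))` is isomorphic
to `S_{n-1}`. -/
theorem stmt10 (n : ℕ) (k : Fin (n + 1)) :
    ∃ ψ : {p : Equiv.Perm (Fin (n + 2)) × Fin (n + 1) //
            p.1 p.2.castSucc = k.castSucc ∧ p.1 p.2.succ = k.succ} →
          Equiv.Perm (Fin (n + 1)),
      Function.Bijective ψ ∧
      (∀ p x, ψ p x = k.predAbove (p.1.1 (p.1.2.castSucc.succAbove x))) ∧
      (∀ p q, inversions p.1.1 ⊆ inversions q.1.1 ↔ inversions (ψ p) ⊆ inversions (ψ q)) := by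
  classical
  -- The key compatibility : for a pair p, w (succAbove i x) = succAbove k (ψfun x)
  set S := {p : Equiv.Perm (Fin (n + 2)) × Fin (n + 1) //
            p.1 p.2.castSucc = k.castSucc ∧ p.1 p.2.succ = k.succ}
  let f : S → Fin (n+1) → Fin (n+1) :=
    fun p x => k.predAbove (p.1.1 (p.1.2.castSucc.succAbove x))
  have hne : ∀ (p : S) x, p.1.1 (p.1.2.castSucc.succAbove x) ≠ k.castSucc := by
    intro p x h
    have := p.1.1.injective (h.trans p.2.1.symm)
    exact Fin.succAbove_ne _ _ this
  have hcompat : ∀ (p : S) x,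
      p.1.1 (p.1.2.castSucc.succAbove x) = k.castSucc.succAbove (f p x) := by
    intro p x
    exact (Fin.succAbove_predAbove (hne p x)).symm
  have hfinj : ∀ p : S, Function.Injective (f p) := by
    intro p x y h
    have : p.1.1 (p.1.2.castSucc.succAbove x) = p.1.1 (p.1.2.castSucc.succAbove y) := by
      rw [hcompat p x, hcompat p y, h]
    exact Fin.succAbove_right_injective (p.1.1.injective this)
  let ψ : S → Equiv.Perm (Fin (n+1)) := fun p =>
    Equiv.ofBijective (f p) ((Finite.injective_iff_bijective).1 (hfinj p))
  have hψ : ∀ (p : S) x, ψ p x = f p x := fun p x => rfl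
  have hψi : ∀ p : S, ψ p p.1.2 = k := by
    intro p
    rw [hψ]
    show k.predAbove (p.1.1 (p.1.2.castSucc.succAbove p.1.2)) = k
    rw [Fin.succAbove_castSucc_self, p.2.2, Fin.predAbove_succ_self]
  refine ⟨ψ, ⟨?_, ?_⟩, fun p x => rfl, ?_⟩
  · -- injective
    intro p q h
    have hi : p.1.2 = q.1.2 := by
      have h1 : ψ p p.1.2 = k := hψi p
      have h2 : ψ q q.1.2 = k := hψi q
      rw [h] at h1
      exact (ψ q).injective (h1.trans h2.symm)
    have hw : p.1.1 = q.1.1 := by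
      apply Equiv.ext
      intro j
      by_cases hj : j = p.1.2.castSucc
      · rw [hj, p.2.1, hi, q.2.1]
      · obtain ⟨x, rfl⟩ := Fin.exists_succAbove_eq hj
        rw [hcompat p x, hi, hcompat q x]
        congr 1
        rw [← hψ p x, ← hψ q x, h]
    rcases p with ⟨⟨w, i⟩, hp⟩; rcases q with ⟨⟨w', i'⟩, hq⟩
    simp only at hi hw
    simp [hi, hw]
  · -- surjective
    intro u
    set i : Fin (n+1) := u⁻¹ k with hidef
    let W : Fin (n+2) → Fin (n+2) := fun j =>
      if j = i.castSucc then k.castSucc else k.castSucc.succAbove (u (i.predAbove j))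
    have hW1 : ∀ x, W (i.castSucc.succAbove x) = k.castSucc.succAbove (u x) := by
      intro x
      simp only [W]
      rw [if_neg (Fin.succAbove_ne _ _), Fin.predAbove_succAbove]
    have hWinj : Function.Injective W := by
      intro a b hab
      by_cases ha : a = i.castSucc <;> by_cases hb : b = i.castSucc
      · rw [ha, hb]
      · simp only [W, if_pos ha, if_neg hb] at hab
        exact absurd hab.symm (Fin.succAbove_ne _ _)
      · simp only [W, if_neg ha, if_pos hb] at hab
        exact absurd hab (Fin.succAbove_ne _ _)
      · simp only [W, if_neg ha, if_neg hb] at hab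
        have := u.injective (Fin.succAbove_right_injective hab)
        calc a = i.castSucc.succAbove (i.predAbove a) := (Fin.succAbove_predAbove ha).symm
        _ = i.castSucc.succAbove (i.predAbove b) := by rw [this]
        _ = b := Fin.succAbove_predAbove hb
    let w : Equiv.Perm (Fin (n+2)) :=
      Equiv.ofBijective W ((Finite.injective_iff_bijective).1 hWinj)
    have hw0 : w i.castSucc = k.castSucc := if_pos rfl
    have hw1 : w i.succ = k.succ := by
      show W i.succ = k.succ
      rw [← Fin.succAbove_castSucc_self i, hW1, hidef, perm_apply_inv_self,
        Fin.succAbove_castSucc_self]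
    refine ⟨⟨⟨w, i⟩, hw0, hw1⟩, ?_⟩
    apply Equiv.ext
    intro x
    rw [hψ]
    show k.predAbove (W (i.castSucc.succAbove x)) = u x
    rw [hW1, Fin.predAbove_succAbove]
  · -- order iso
    intro p q
    obtain ⟨hpA, hpB, hpC⟩ := inv_char k p.1.1 p.1.2 (ψ p) p.2.1 p.2.2 (hcompat p)
    obtain ⟨hqA, hqB, hqC⟩ := inv_char k q.1.1 q.1.2 (ψ q) q.2.1 q.2.2 (hcompat q)
    constructor
    · intro h a ha
      rcases a with ⟨a, b⟩
      exact (hqA a b).1 (h ((hpA a b).2 ha))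
    · intro h a ha
      rcases a with ⟨a, b⟩
      by_cases hak : a = k.castSucc
      · subst hak
        have hb : b ≠ k.castSucc := by
          intro hb; rw [hb] at ha; exact absurd ha.1 (lt_irrefl _)
        obtain ⟨b', rfl⟩ := Fin.exists_succAbove_eq hb
        exact (hqB b').2 (h ((hpB b').1 ha))
      · obtain ⟨a', rfl⟩ := Fin.exists_succAbove_eq hak
        by_cases hbk : b = k.castSucc
        · subst hbk
          exact (hqC a').2 (h ((hpC a').1 ha))
        · obtain ⟨b', rfl⟩ := Fin.exists_succAbove_eq hbk
          exact (hqA a' b').2 (h ((hpA a' b').1 ha))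
end

section
/- Let D be the inversion set of a permutation w of [n] and k ∈ [n-1]. Then D' = {(a,b) ∈ D : [k,k+1] ⊄ [a,b]} (i.e. those (a,b) with a < b not satisfying a ≤ k and k+1 ≤ b) is itself the inversion set of some permutation of [n]. -/
/-- If `D` is the inversion set of a permutation `w` of `[n]`, then
`D' = {(a,b) ∈ D : [k,k+1] ⊄ [a,b]}` is again the inversion set of some permutation. -/
theorem stmt11 (n : ℕ) (w : Equiv.Perm (Fin n)) (k : Fin n) :
    ∃ w' : Equiv.Perm (Fin n),
      inversions w' =
        {p ∈ inversions w | ¬((p.1 : ℕ) ≤ (k : ℕ) ∧ (k : ℕ) + 1 ≤ (p.2 : ℕ))} := by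
  classical
  set f : Fin n → Bool ×ₗ Fin n :=
    fun a => toLex (decide ((k : ℕ) < (a : ℕ)), w⁻¹ a) with hf
  have hfinj : Function.Injective f := by
    intro a b hab
    have h2 : (ofLex (f a)).2 = (ofLex (f b)).2 := by rw [hab]
    exact w⁻¹.injective h2
  set s : Finset (Bool ×ₗ Fin n) := Finset.univ.image f with hs'
  have hs : s.card = n := by
    rw [hs', Finset.card_image_of_injective _ hfinj, Finset.card_univ, Fintype.card_fin]
  set iso := s.orderIsoOfFin hs with hiso
  set e : Fin n → Fin n :=
    fun a => iso.symm ⟨f a, Finset.mem_image_of_mem f (Finset.mem_univ a)⟩ with he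
  have hemono : ∀ a b, e a < e b ↔ f a < f b := by
    intro a b
    rw [he]
    simp only
    rw [iso.symm.lt_iff_lt, Subtype.mk_lt_mk]
  have heinj : Function.Injective e := by
    intro a b hab
    have h1 : ¬ f a < f b := by rw [← hemono]; simp [hab]
    have h2 : ¬ f b < f a := by rw [← hemono]; simp [hab]
    exact hfinj (le_antisymm (not_lt.mp h2) (not_lt.mp h1))
  have hebij : Function.Bijective e := Finite.injective_iff_bijective.mp heinj
  refine ⟨(Equiv.ofBijective e hebij).symm, ?_⟩
  have hinv : ((Equiv.ofBijective e hebij).symm)⁻¹ = Equiv.ofBijective e hebij := rfl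
  ext ⟨a, b⟩
  simp only [inversions, Set.mem_setOf_eq, hinv, Equiv.ofBijective_apply, Set.mem_sep_iff]
  constructor
  · rintro ⟨hab, hlt⟩
    rw [hemono] at hlt
    rw [hf] at hlt
    rw [Prod.Lex.lt_iff] at hlt
    simp only at hlt
    have hblk : ¬ (decide ((k : ℕ) < (b : ℕ)) < decide ((k : ℕ) < (a : ℕ))) := by
      rcases Nat.lt_or_ge (k : ℕ) (a : ℕ) with h | h
      · have : (k : ℕ) < (b : ℕ) := h.trans hab
        simp [h, this]
      · simp [Bool.lt_iff, Nat.not_lt.mpr h]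
    rcases hlt with h | ⟨heq, hlt⟩
    · exact absurd h hblk
    · have hvals : ((k : ℕ) < (b : ℕ)) ↔ ((k : ℕ) < (a : ℕ)) :=
        decide_eq_decide.mp heq
      refine ⟨⟨hab, hlt⟩, ?_⟩
      rintro ⟨h1, h2⟩
      have hkb : (k : ℕ) < (b : ℕ) := by omega
      have : (k : ℕ) < (a : ℕ) := hvals.mp hkb
      omega
  · rintro ⟨⟨hab, hlt⟩, hnot⟩
    refine ⟨hab, ?_⟩
    rw [hemono, hf, Prod.Lex.lt_iff]
    simp only
    right
    have hab' : (a : ℕ) < (b : ℕ) := hab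
    refine ⟨?_, hlt⟩
    show decide ((k : ℕ) < (b : ℕ)) = decide ((k : ℕ) < (a : ℕ))
    rw [decide_eq_decide]
    constructor <;> intro h <;> omega
end

section
/- Let v ∈ [n]^n be a bracketing vector and k ∈ [n-1] a split of v. Define v^k by v^k_i = v_{v_k + 1} if i = k and v^k_i = v_i otherwise. Then v^k is again a bracketing vector. -/
/-- A bracketing vector: `i ≤ v i` and `i < j ≤ v i` implies `v j ≤ v i`. -/
def IsBracketing {n : ℕ} (v : Fin n → Fin n) : Prop :=
  (∀ i, i ≤ v i) ∧ ∀ i j : Fin n, i < j → j ≤ v i → v j ≤ v i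

/-- `k ∈ [n-1]` is a split of `v`: whenever `i < k ≤ v i` we have `v (v k + 1) ≤ v i`
(the split condition forces `v k + 1` to be a valid index). -/
structure IsSplit {n : ℕ} (v : Fin n → Fin n) (k : Fin n) : Prop where
  hk : (k : ℕ) + 1 < n
  hvk : (v k : ℕ) + 1 < n
  cond : ∀ i : Fin n, i < k → k ≤ v i → v ⟨(v k : ℕ) + 1, hvk⟩ ≤ v i

/-- The vector `v^k`: agrees with `v` except `v^k k = v (v k + 1)`. -/
def splitStep {n : ℕ} (v : Fin n → Fin n) (k : Fin n) (h : (v k : ℕ) + 1 < n) :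
    Fin n → Fin n := fun i => if i = k then v ⟨(v k : ℕ) + 1, h⟩ else v i

/-- If `k` is a split of the bracketing vector `v`, then `v^k` is again a bracketing
vector. -/
theorem stmt14 (n : ℕ) (v : Fin n → Fin n) (k : Fin n)
    (hb : IsBracketing v) (hs : IsSplit v k) :
    IsBracketing (splitStep v k hs.hvk) := by
  obtain ⟨h1, h2⟩ := hb
  have hvk := hs.hvk
  have hvkm : (v k : ℕ) < (v ⟨(v k : ℕ) + 1, hvk⟩ : ℕ) := by
    have := h1 ⟨(v k : ℕ) + 1, hvk⟩
    rw [Fin.le_def] at this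
    simpa using this
  have hkm : (k : ℕ) ≤ (v ⟨(v k : ℕ) + 1, hvk⟩ : ℕ) := by
    have := Fin.le_def.mp (h1 k)
    omega
  constructor
  · intro i
    by_cases hi : i = k
    · rw [hi]
      simp only [splitStep, if_pos rfl]
      rw [Fin.le_def]
      exact hkm
    · simp only [splitStep, if_neg hi]
      exact h1 i
  · intro i j hij hji
    simp only [splitStep] at hji ⊢
    by_cases hi : i = k <;> by_cases hj : j = k
    · exact absurd (hi.trans hj.symm) (ne_of_lt hij)
    · -- i = k, j ≠ k : need v j ≤ v ⟨vk+1⟩ given k < j ≤ v ⟨vk+1⟩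
      rw [if_pos hi] at hji ⊢
      rw [if_neg hj]
      rcases le_or_gt (j : ℕ) (v k : ℕ) with hc | hc
      · have hjk : j ≤ v k := Fin.le_def.mpr hc
        have := Fin.le_def.mp (h2 k j (hi ▸ hij) hjk)
        rw [Fin.le_def]
        omega
      · rcases eq_or_lt_of_le (Nat.succ_le_of_lt hc) with hc2 | hc2
        · have hjp : j = ⟨(v k : ℕ) + 1, hvk⟩ := by
            apply Fin.ext; simpa using hc2.symm
          rw [hjp]
        · exact h2 ⟨(v k : ℕ) + 1, hvk⟩ j (Fin.lt_def.mpr (by simpa using hc2)) hji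
    · -- j = k, i ≠ k
      rw [if_neg hi] at hji ⊢
      rw [if_pos hj]
      exact hs.cond i (hj ▸ hij) (hj ▸ hji)
    · rw [if_neg hi] at hji ⊢
      rw [if_neg hj]
      exact h2 i j hij hji
end

section
/- Let v ∈ [n]^n be a bracketing vector and k a split of v. Then v ⋖ v^k in the pointwise order on bracketing vectors, i.e. v < v^k and there is no bracketing vector strictly between them. Moreover every covering pair in the pointwise order on bracketing vectors arises this way: if v < w, the least index k with v_k < w_k is a split of v and v^k ≤ w. -/
/-- If `k` is a split of the bracketing vector `v`, then `v ⋖ v^k` in the pointwise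
order on bracketing vectors; moreover every cover arises this way: if `v < w`, the
least index `m` with `v m < w m` is a split of `v` with `v^m ≤ w`. -/
theorem stmt15 (n : ℕ) (v : Fin n → Fin n) (k : Fin n)
    (hb : IsBracketing v) (hs : IsSplit v k) :
    v < splitStep v k hs.hvk ∧
    (∀ w : Fin n → Fin n, IsBracketing w → v < w → w < splitStep v k hs.hvk → False) ∧
    (∀ w : Fin n → Fin n, IsBracketing w → v < w →
      ∀ m : Fin n, v m < w m → (∀ j, j < m → v j = w j) →
        ∃ hm : IsSplit v m, splitStep v m hm.hvk ≤ w) := by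
  obtain ⟨hle, hbr⟩ := hb
  set k' : Fin n := ⟨(v k : ℕ) + 1, hs.hvk⟩ with hk'def
  have hvkk'lt : v k < k' := Fin.lt_def.mpr (Nat.lt_succ_self _)
  have hkk' : k < k' := lt_of_le_of_lt (hle k) hvkk'lt
  have hvkk' : v k < v k' := lt_of_lt_of_le hvkk'lt (hle k')
  refine ⟨?_, ?_, ?_⟩
  · rw [Pi.lt_def]
    refine ⟨fun i => ?_, ⟨k, by simpa [splitStep] using hvkk'⟩⟩
    by_cases hik : i = k
    · subst hik; simpa [splitStep] using le_of_lt hvkk'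
    · simp [splitStep, hik]
  · intro w hbw hvw hws
    have hle1 := (Pi.lt_def.mp hvw).1
    have hle2 := (Pi.lt_def.mp hws).1
    have heq : ∀ i, i ≠ k → w i = v i := fun i hik =>
      le_antisymm (by simpa [splitStep, hik] using hle2 i) (hle1 i)
    have h1 : v k < w k := by
      rcases (Pi.lt_def.mp hvw).2 with ⟨i, hi⟩
      by_cases hik : i = k
      · subst hik; exact hi
      · exact absurd hi (by rw [heq i hik]; exact lt_irrefl _)
    have h2 : w k < v k' := by
      rcases (Pi.lt_def.mp hws).2 with ⟨i, hi⟩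
      by_cases hik : i = k
      · subst hik; simpa [splitStep] using hi
      · exact absurd hi (by rw [heq i hik]; simp [splitStep, hik])
    have hk'w : k' ≤ w k := Fin.le_def.mpr (Nat.succ_le_of_lt (Fin.lt_def.mp h1))
    have hwk' : w k' ≤ w k := hbw.2 k k' hkk' hk'w
    rw [heq k' hkk'.ne'] at hwk'
    exact absurd (lt_of_le_of_lt hwk' h2) (lt_irrefl _)
  · intro w hbw hvw m hm hprev
    have hlew := (Pi.lt_def.mp hvw).1
    have hmw : (v m : ℕ) + 1 ≤ (w m : ℕ) := Nat.succ_le_of_lt (Fin.lt_def.mp hm)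
    have hvm1 : (v m : ℕ) + 1 < n := lt_of_le_of_lt hmw (w m).isLt
    have hm1 : (m : ℕ) + 1 < n :=
      lt_of_le_of_lt (Nat.succ_le_succ (Fin.le_def.mp (hle m))) hvm1
    set m' : Fin n := ⟨(v m : ℕ) + 1, hvm1⟩ with hm'def
    have hmm' : m < m' := Fin.lt_def.mpr (Nat.lt_succ_of_le (Fin.le_def.mp (hle m)))
    have hm'wm : m' ≤ w m := Fin.le_def.mpr hmw
    have hwm'm : w m' ≤ w m := hbw.2 m m' hmm' hm'wm
    have hsplit : IsSplit v m := ⟨hm1, hvm1, fun i him hmvi => by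
      have heqi : v i = w i := hprev i him
      have h1 : w m ≤ w i := hbw.2 i m him (heqi ▸ hmvi)
      calc v m' ≤ w m' := hlew m'
        _ ≤ w m := hwm'm
        _ ≤ w i := h1
        _ = v i := heqi.symm⟩
    refine ⟨hsplit, fun i => ?_⟩
    by_cases hik : i = m
    · subst hik
      simp only [splitStep, if_pos rfl]
      exact le_trans (hlew _) hwm'm
    · simp only [splitStep, if_neg hik]
      exact hlew i
end

section
/- Let v be a bracketing vector of length n and k ∈ [n-1] a split of v with v_k = k such that k is the only index i with v_i = k. Then ψ(v,k) := δ_k ∘ v ∘ σ̂_k (as a function [n-1] → [n-1]) is again a bracketing vector, i.e. it satisfies i ≤ ψ(v,k)_i and (i < j ≤ ψ(v,k)_i ⟹ ψ(v,k)_j ≤ ψ(v,k)_i). -/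
lemma succAbove_val_aux (n : ℕ) (k : Fin n) (x : Fin n) :
    ((k.castSucc.succAbove x : Fin (n+1)) : ℕ) = if (x:ℕ) < (k:ℕ) then (x:ℕ) else (x:ℕ) + 1 := by
  rcases lt_or_ge (x:ℕ) (k:ℕ) with h | h
  · rw [Fin.succAbove_of_castSucc_lt _ _ (Fin.castSucc_lt_castSucc_iff.mpr h)]
    simp [h]
  · rw [Fin.succAbove_of_le_castSucc _ _ (Fin.castSucc_le_castSucc_iff.mpr h)]
    simp [Nat.not_lt.mpr h]

lemma predAbove_val_aux (n : ℕ) (k : Fin n) (a : Fin (n+1)) :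
    ((k.predAbove a : Fin n) : ℕ) = if (k:ℕ) < (a:ℕ) then (a:ℕ) - 1 else (a:ℕ) := by
  rcases lt_or_ge (k:ℕ) (a:ℕ) with h | h
  · rw [Fin.predAbove_of_castSucc_lt _ _ (by simpa [Fin.lt_def] using h)]
    simp [h]
  · rw [Fin.predAbove_of_le_castSucc _ _ (by simpa [Fin.le_def] using h)]
    simp [Nat.not_lt.mpr h]

/-- If `k` is a split of the bracketing vector `v` with `v k = k` and `k` the unique
index with value `k`, then `ψ(v,k) = δ_k ∘ v ∘ σ̂_k` is again a bracketing vector. -/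
theorem stmt17 (n : ℕ) (v : Fin (n + 1) → Fin (n + 1)) (k : Fin n)
    (hb : IsBracketing v) (hs : IsSplit v k.castSucc)
    (hvk : v k.castSucc = k.castSucc)
    (huniq : ∀ i, v i = k.castSucc → i = k.castSucc) :
    IsBracketing (fun x : Fin n => k.predAbove (v (k.castSucc.succAbove x))) := by
  obtain ⟨h1, h2⟩ := hb
  constructor
  · intro x
    calc x = k.predAbove (k.castSucc.succAbove x) := (Fin.predAbove_succAbove k x).symm
      _ ≤ _ := Fin.predAbove_right_monotone k (h1 _)
  · intro x y hxy hyx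
    simp only at hyx ⊢
    have hane : v (k.castSucc.succAbove x) ≠ k.castSucc := by
      intro h
      exact Fin.succAbove_ne k.castSucc x (huniq _ h)
    have hy' : k.castSucc.succAbove y ≤ v (k.castSucc.succAbove x) := by
      have hv := predAbove_val_aux n k (v (k.castSucc.succAbove x))
      have hσ := succAbove_val_aux n k y
      have hne : ((v (k.castSucc.succAbove x)) : ℕ) ≠ (k:ℕ) := by
        intro h
        exact hane (Fin.ext (by simpa using h))
      have hyx' : (y:ℕ) ≤ ((k.predAbove (v (k.castSucc.succAbove x))) : Fin n) := hyx
      rw [Fin.le_def, hσ]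
      rw [hv] at hyx'
      split at hyx' <;> split <;> omega
    exact Fin.predAbove_right_monotone k
      (h2 _ _ (Fin.strictMono_succAbove k.castSucc hxy) hy')
end

section
/- Let v be a bracketing vector of length n with v_k = k and v_i ≠ k for i ≠ k, and set ψ = δ_k ∘ v ∘ σ̂_k. Then for j ∈ [n-2], j is a split of the bracketing vector ψ if and only if σ̂_k(j) is a split of v. -/
/-- With `v` a bracketing vector, `k` a split of `v`, `v k = k` and `v i ≠ k` for
`i ≠ k`, and `ψ = δ_k ∘ v ∘ σ̂_k`:  `j` is a split of `ψ` iff `σ̂_k(j)` is a split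
of `v`. -/
theorem stmt18 (n : ℕ) (v : Fin (n + 1) → Fin (n + 1)) (k : Fin n)
    (hb : IsBracketing v) (hs : IsSplit v k.castSucc)
    (hvk : v k.castSucc = k.castSucc)
    (huniq : ∀ i, v i = k.castSucc → i = k.castSucc) (j : Fin n) :
    IsSplit (fun x : Fin n => k.predAbove (v (k.castSucc.succAbove x))) j ↔
      IsSplit v (k.castSucc.succAbove j) := by
  have hkn : (k : ℕ) < n := k.isLt
  have hne : ∀ x : Fin n, v (k.castSucc.succAbove x) ≠ k.castSucc := fun x h =>
    k.castSucc.succAbove_ne x (huniq _ h)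
  have hnev : ∀ x : Fin n, ((v (k.castSucc.succAbove x)) : ℕ) ≠ (k : ℕ) := by
    intro x h
    exact hne x (Fin.ext (by simpa using h))
  have hσψ : ∀ x : Fin n,
      k.castSucc.succAbove (k.predAbove (v (k.castSucc.succAbove x)))
        = v (k.castSucc.succAbove x) := fun x => Fin.succAbove_predAbove (hne x)
  have hσval : ∀ x : Fin n, ((k.castSucc.succAbove x) : ℕ)
      = if (x : ℕ) < (k : ℕ) then (x : ℕ) else (x : ℕ) + 1 := by
    intro x
    rw [Fin.succAbove]
    split
    · next h => rw [if_pos (show (x : ℕ) < (k : ℕ) from h)]; rfl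
    · next h => rw [if_neg (show ¬ (x : ℕ) < (k : ℕ) from h)]; rfl
  have hψval : ∀ x : Fin n, ((k.predAbove (v (k.castSucc.succAbove x))) : ℕ)
      = if ((v (k.castSucc.succAbove x)) : ℕ) < (k : ℕ)
        then ((v (k.castSucc.succAbove x)) : ℕ)
        else ((v (k.castSucc.succAbove x)) : ℕ) - 1 := by
    intro x
    rw [Fin.predAbove]
    split
    · next h =>
      have : (k : ℕ) < ((v (k.castSucc.succAbove x)) : ℕ) := by simpa [Fin.lt_def] using h
      rw [if_neg (by omega)]; rfl
    · next h =>
      have : ¬ (k : ℕ) < ((v (k.castSucc.succAbove x)) : ℕ) := by simpa [Fin.lt_def] using h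
      rw [if_pos (by have := hnev x; omega)]; rfl
  have hb1 : ∀ i : Fin (n + 1), (i : ℕ) ≤ (v i : ℕ) := fun i => hb.1 i
  have hb2 : ∀ i i' : Fin (n + 1), (i : ℕ) < (i' : ℕ) → (i' : ℕ) ≤ (v i : ℕ) →
      (v i' : ℕ) ≤ (v i : ℕ) := fun i i' h h' => hb.2 i i' h h'
  -- the generic index correspondence
  have hidx : ((v (k.castSucc.succAbove j)) : ℕ) + 1 ≠ (k : ℕ) →
      ∀ (hh : ((k.predAbove (v (k.castSucc.succAbove j))) : ℕ) + 1 < n)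
        (HH : ((v (k.castSucc.succAbove j)) : ℕ) + 1 < n + 1),
      k.castSucc.succAbove ⟨((k.predAbove (v (k.castSucc.succAbove j))) : ℕ) + 1, hh⟩
        = ⟨((v (k.castSucc.succAbove j)) : ℕ) + 1, HH⟩ := by
    intro hc hh HH
    apply Fin.ext
    rw [hσval]
    have h1 := hψval j
    have h2 := hnev j
    simp only
    split_ifs at h1 ⊢ <;> omega
  constructor
  · rintro ⟨h1, h2, h3⟩
    have Hk : ((k.castSucc.succAbove j) : ℕ) + 1 < n + 1 := by
      have hs1 := hσval j; split_ifs at hs1 <;> omega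
    have Hvk : ((v (k.castSucc.succAbove j)) : ℕ) + 1 < n + 1 := by
      have hs1 := hψval j
      have hs2 := hnev j
      split_ifs at hs1 <;> omega
    refine ⟨Hk, Hvk, ?_⟩
    intro i hi1 hi2
    have hiK : i ≠ k.castSucc := by
      intro h
      rw [h, hvk] at hi2
      rw [h] at hi1
      exact absurd hi1 (not_lt.mpr hi2)
    have hx : k.castSucc.succAbove (k.predAbove i) = i := Fin.succAbove_predAbove hiK
    have hx1 : k.predAbove i < j :=
      Fin.succAbove_lt_succAbove_iff.mp (by rw [hx]; exact hi1)
    have hσψx : k.castSucc.succAbove (k.predAbove (v i)) = v i := by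
      have h := hσψ (k.predAbove i); rw [hx] at h; exact h
    have hx2 : j ≤ k.predAbove (v i) :=
      Fin.succAbove_le_succAbove_iff.mp (by rw [hσψx]; exact hi2)
    have hx2' : j ≤ k.predAbove (v (k.castSucc.succAbove (k.predAbove i))) := by
      rw [hx]; exact hx2
    have H := h3 (k.predAbove i) hx1 hx2'
    rw [hx] at H
    by_cases hc : ((v (k.castSucc.succAbove j)) : ℕ) + 1 = (k : ℕ)
    · -- edge case : v (σ j) + 1 = k
      have hvj : ((v (k.castSucc.succAbove j)) : ℕ) < (k : ℕ) := by omega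
      have hpj : ((k.predAbove (v (k.castSucc.succAbove j))) : ℕ)
          = ((v (k.castSucc.succAbove j)) : ℕ) := by rw [hψval j, if_pos hvj]
      set y : Fin n := ⟨((k.predAbove (v (k.castSucc.succAbove j))) : ℕ) + 1, h2⟩ with hydef
      have hy : (y : ℕ) = (k : ℕ) := by
        show ((k.predAbove (v (k.castSucc.succAbove j))) : ℕ) + 1 = (k : ℕ); omega
      have hσy : ((k.castSucc.succAbove y) : ℕ) = (k : ℕ) + 1 := by
        rw [hσval y, if_neg (by omega)]; omega
      have hvy : (k : ℕ) + 1 ≤ ((v (k.castSucc.succAbove y)) : ℕ) := by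
        have := hb1 (k.castSucc.succAbove y); omega
      have hψy : ((k.predAbove (v (k.castSucc.succAbove y))) : ℕ)
          = ((v (k.castSucc.succAbove y)) : ℕ) - 1 := by
        rw [hψval y, if_neg (by omega)]
      have Hnat : ((k.predAbove (v (k.castSucc.succAbove y))) : ℕ)
          ≤ ((k.predAbove (v i)) : ℕ) := H
      have hψx : ((k.predAbove (v i)) : ℕ)
          = if ((v i) : ℕ) < (k : ℕ) then ((v i) : ℕ) else ((v i) : ℕ) - 1 := by
        have h := hψval (k.predAbove i); rw [hx] at h; exact h
      have hvineK : ((v i) : ℕ) ≠ (k : ℕ) := by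
        have h := hnev (k.predAbove i); rw [hx] at h; exact h
      have heq : (⟨((v (k.castSucc.succAbove j)) : ℕ) + 1, Hvk⟩ : Fin (n + 1))
          = k.castSucc := Fin.ext (by simpa using hc)
      rw [heq, hvk, Fin.le_def]
      simp only [Fin.coe_castSucc]
      split_ifs at hψx <;> omega
    · -- generic case
      have hle : k.castSucc.succAbove (k.predAbove (v (k.castSucc.succAbove
            ⟨((k.predAbove (v (k.castSucc.succAbove j))) : ℕ) + 1, h2⟩)))
          ≤ k.castSucc.succAbove (k.predAbove (v i)) :=
        Fin.succAbove_le_succAbove_iff.mpr H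
      rw [hσψ ⟨((k.predAbove (v (k.castSucc.succAbove j))) : ℕ) + 1, h2⟩, hσψx,
        hidx hc h2 Hvk] at hle
      exact hle
  · rintro ⟨H1, H2, H3⟩
    have hσj := hσval j
    have Hk : (j : ℕ) + 1 < n := by split_ifs at hσj <;> omega
    have hψj := hψval j
    have hnj := hnev j
    have Hvk : ((k.predAbove (v (k.castSucc.succAbove j))) : ℕ) + 1 < n := by
      split_ifs at hψj <;> omega
    refine ⟨Hk, Hvk, ?_⟩
    intro x hx1 hx2
    have hi1 : k.castSucc.succAbove x < k.castSucc.succAbove j :=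
      Fin.succAbove_lt_succAbove_iff.mpr hx1
    have hi2 : k.castSucc.succAbove j ≤ v (k.castSucc.succAbove x) := by
      rw [← hσψ x]
      exact Fin.succAbove_le_succAbove_iff.mpr hx2
    have Hv := H3 (k.castSucc.succAbove x) hi1 hi2
    by_cases hc : ((v (k.castSucc.succAbove j)) : ℕ) + 1 = (k : ℕ)
    · -- edge case
      have hvj : ((v (k.castSucc.succAbove j)) : ℕ) < (k : ℕ) := by omega
      have hpj : ((k.predAbove (v (k.castSucc.succAbove j))) : ℕ)
          = ((v (k.castSucc.succAbove j)) : ℕ) := by rw [hψval j, if_pos hvj]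
      set y : Fin n := ⟨((k.predAbove (v (k.castSucc.succAbove j))) : ℕ) + 1, Hvk⟩ with hydef
      have hy : (y : ℕ) = (k : ℕ) := by
        show ((k.predAbove (v (k.castSucc.succAbove j))) : ℕ) + 1 = (k : ℕ); omega
      have hσy : ((k.castSucc.succAbove y) : ℕ) = (k : ℕ) + 1 := by
        rw [hσval y, if_neg (by omega)]; omega
      have hvy : (k : ℕ) + 1 ≤ ((v (k.castSucc.succAbove y)) : ℕ) := by
        have := hb1 (k.castSucc.succAbove y); omega
      have hψy : ((k.predAbove (v (k.castSucc.succAbove y))) : ℕ)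
          = ((v (k.castSucc.succAbove y)) : ℕ) - 1 := by
        rw [hψval y, if_neg (by omega)]
      -- Hv : v ⟨vσj+1, H2⟩ ≤ v (σ x), and ⟨vσj+1,H2⟩ = k.castSucc
      have heq : (⟨((v (k.castSucc.succAbove j)) : ℕ) + 1, H2⟩ : Fin (n + 1)) = k.castSucc :=
        Fin.ext (by simpa using hc)
      rw [heq, hvk] at Hv
      have hkvx : (k : ℕ) ≤ ((v (k.castSucc.succAbove x)) : ℕ) := Hv
      have hkvx' : (k : ℕ) + 1 ≤ ((v (k.castSucc.succAbove x)) : ℕ) := by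
        have := hnev x; omega
      -- σ x < k + 1
      have hσjle : ((k.castSucc.succAbove j) : ℕ) ≤ ((v (k.castSucc.succAbove j)) : ℕ) :=
        hb1 _
      have hσxlt : ((k.castSucc.succAbove x) : ℕ) < (k : ℕ) + 1 := by
        have : ((k.castSucc.succAbove x) : ℕ) < ((k.castSucc.succAbove j) : ℕ) := hi1
        omega
      have hbr := hb2 (k.castSucc.succAbove x) (k.castSucc.succAbove y)
        (by omega) (by omega)
      have hψx := hψval x
      show ((k.predAbove (v (k.castSucc.succAbove y))) : ℕ)
          ≤ ((k.predAbove (v (k.castSucc.succAbove x))) : ℕ)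
      split_ifs at hψx <;> omega
    · -- generic case
      have hIdx := hidx hc Hvk H2
      have : v (k.castSucc.succAbove
          ⟨((k.predAbove (v (k.castSucc.succAbove j))) : ℕ) + 1, Hvk⟩)
          ≤ v (k.castSucc.succAbove x) := by rw [hIdx]; exact Hv
      rw [← hσψ ⟨((k.predAbove (v (k.castSucc.succAbove j))) : ℕ) + 1, Hvk⟩,
        ← hσψ x] at this
      exact Fin.succAbove_le_succAbove_iff.mp this
end

section
/- Let α be an atomic cover (⊥, a) of a finite distributive lattice L, where a is an atom. Then the map x ↦ (x, x ∨ a) is an order isomorphism from the lower set {x ∈ L : a ≰ x} onto the set of covering pairs of L perspective to (⊥, a), ordered componentwise; in particular, for every x with a ≰ x, the pair x ⋖ x ∨ a is a covering pair. -/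
theorem covlem {L : Type*} [DistribLattice L] [OrderBot L]
    {a : L} (ha : IsAtom a) : ∀ x : L, ¬a ≤ x → x ⋖ x ⊔ a := by
  intro x hax
  constructor
  · exact lt_of_le_of_ne le_sup_left (fun h => hax (h ▸ le_sup_right))
  · intro z hz hz2
    have h1 : z = x ⊔ (z ⊓ a) := calc
      z = z ⊓ (x ⊔ a) := (inf_eq_left.mpr hz2.le).symm
      _ = (z ⊓ x) ⊔ (z ⊓ a) := inf_sup_left z x a
      _ = x ⊔ (z ⊓ a) := by rw [inf_eq_right.mpr hz.le]
    rcases (ha.le_iff.mp inf_le_right) with h | h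
    · exact absurd (h1.trans (by rw [h, sup_bot_eq])) hz.ne'
    · exact absurd (h1.trans (by rw [h])) (ne_of_lt hz2)

/-- Let `a` be an atom of a finite distributive lattice `L`.  Then for every `x` with
`a ≰ x` the pair `x ⋖ x ⊔ a` is a covering pair, and `x ↦ (x, x ⊔ a)` is an order
isomorphism from the lower set `{x : a ≰ x}` onto the set of covering pairs of `L`
perspective to `(⊥, a)` (those `(x, y)` with `x ⋖ y`, `a ≰ x`, `y = x ⊔ a`), ordered
componentwise. -/
theorem stmt19 (L : Type*) [DistribLattice L] [Fintype L] [OrderBot L]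
    (a : L) (ha : IsAtom a) :
    (∀ x : L, ¬a ≤ x → x ⋖ x ⊔ a) ∧
    ∃ f : {x : L // ¬a ≤ x} ≃o
        {p : L × L // p.1 ⋖ p.2 ∧ ¬a ≤ p.1 ∧ p.2 = p.1 ⊔ a},
      ∀ x : {x : L // ¬a ≤ x}, (f x : L × L) = (x.1, x.1 ⊔ a) := by
  refine ⟨covlem ha, ?_⟩
  refine ⟨{ toFun := fun x => ⟨(x.1, x.1 ⊔ a), covlem ha x.1 x.2, x.2, rfl⟩
            invFun := fun p => ⟨p.1.1, p.2.2.1⟩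
            left_inv := fun x => rfl
            right_inv := fun p => by
              ext
              · rfl
              · exact p.2.2.2.symm
            map_rel_iff' := ?_ }, fun x => rfl⟩
  intro x y
  constructor
  · intro h
    exact h.1
  · intro h
    exact ⟨h, sup_le_sup_right h a⟩
end
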